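/- Let 𝒯 be a geodesic tube of direction β∨ with centerline ℒ, and let w be a hyperbolic element of the affine Weyl group W^aff. The following are equivalent: (1) w(𝒯)=𝒯; (2) ℒ ⊂ Min(w) and the translation vector v_w is parallel to β∨; (3) there exists a point y ∈ 𝒯 ∩ Min(w) contained in some alcove, and v_w is parallel to β∨. -/

import Mathlib

open scoped RealInnerProductSpace

noncomputable section

/-- The ambient Euclidean space of rank `m`.  Via the fixed `W`-invariant inner product we
identify the space `V` containing the root system with its dual `V*`; the affine space `A`
underlying `V*` is then the Euclidean space itself. -/
abbrev E (m : ℕ) := EuclideanSpace ℝ (Fin m)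

variable {m : ℕ}

/-- The coroot `α∨ = 2α/(α,α)` of a vector `α` (under the identification of `V` with `V*`
given by the invariant inner product). -/
def coroot (α : E m) : E m := (2 / ⟪α, α⟫) • α

/-- The affine reflection `s_{α,k}(x) = x - (⟨α,x⟩ - k) α∨` as a function. -/
def affReflFun (α : E m) (k : ℤ) : E m → E m := fun x => x - (⟪α, x⟫ - (k : ℝ)) • coroot α

lemma affReflFun_involutive (α : E m) (k : ℤ) : Function.Involutive (affReflFun α k) := by
  intro x
  by_cases h : α = 0
  · simp [affReflFun, coroot, h]
  · have hαα : ⟪α, α⟫ ≠ (0:ℝ) := (inner_self_ne_zero (𝕜 := ℝ)).mpr h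
    have h2 : ⟪α, coroot α⟫ = (2:ℝ) := by
      unfold coroot
      rw [real_inner_smul_right, div_mul_cancel₀ _ hαα]
    have key : ∀ y : E m, ∀ s : ℝ, ⟪α, y - s • coroot α⟫ = ⟪α, y⟫ - 2 * s := by
      intro y s
      rw [inner_sub_right, real_inner_smul_right, h2]
      ring
    show affReflFun α k (x - (⟪α, x⟫ - (k:ℝ)) • coroot α) = x
    unfold affReflFun
    rw [key]
    rw [sub_sub, ← add_smul]
    rw [show (⟪α, x⟫ - (k:ℝ)) + (⟪α, x⟫ - 2 * (⟪α, x⟫ - (k:ℝ)) - (k:ℝ)) = 0 by ring]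
    simp

/-- The affine reflection `s_{α,k}` as a permutation of the affine space. -/
def affRefl (α : E m) (k : ℤ) : Equiv.Perm (E m) := (affReflFun_involutive α k).toPerm

/-- The affine Weyl group of a set of roots `Φ`: the group generated by all affine
reflections `s_{α,k}`, `α ∈ Φ`, `k ∈ ℤ`. -/
def Waff (Φ : Set (E m)) : Subgroup (Equiv.Perm (E m)) :=
  Subgroup.closure {w | ∃ α ∈ Φ, ∃ k : ℤ, w = affRefl α k}

/-- `Φ` is a reduced (crystallographic) root system spanning the ambient space. -/
structure IsRootSystem (Φ : Set (E m)) : Prop where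
  finite : Φ.Finite
  ne_zero : ∀ α ∈ Φ, α ≠ (0 : E m)
  span_eq_top : Submodule.span ℝ Φ = ⊤
  reflect_mem : ∀ α ∈ Φ, ∀ β ∈ Φ, β - ⟪α, β⟫ • coroot α ∈ Φ
  crystallographic : ∀ α ∈ Φ, ∀ β ∈ Φ, ∃ z : ℤ, ⟪α, coroot β⟫ = (z : ℝ)
  reduced : ∀ α ∈ Φ, ∀ t : ℝ, t • α ∈ Φ → t = 1 ∨ t = -1

/-- `B` is a system of simple roots of `Φ`. -/
structure IsSimpleSystem (Φ : Set (E m)) (B : Fin m → E m) : Prop where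
  mem : ∀ i, B i ∈ Φ
  indep : LinearIndependent ℝ B
  decomp : ∀ α ∈ Φ, (∃ c : Fin m → ℤ, α = ∑ j, (c j : ℝ) • B j ∧ ∀ j, 0 ≤ c j) ∨
                    (∃ c : Fin m → ℤ, α = ∑ j, (c j : ℝ) • B j ∧ ∀ j, c j ≤ 0)

/-- `ω` is the system of fundamental coweights relative to the simple roots `B`,
i.e. `⟨α_i, ω_j∨⟩ = δ_{ij}`. -/
def IsFundamentalCoweights (B ω : Fin m → E m) : Prop :=
  ∀ i j, ⟪B i, ω j⟫ = if i = j then (1 : ℝ) else 0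

/-- The wall `H_{α,k} = {x : ⟨α,x⟩ = k}`. -/
def wall (α : E m) (k : ℤ) : Set (E m) := {x | ⟪α, x⟫ = (k : ℝ)}

/-- The union of all walls of the root system `Φ`. -/
def allWalls (Φ : Set (E m)) : Set (E m) := ⋃ α ∈ Φ, ⋃ k : ℤ, wall α k

/-- An alcove: a connected component of the complement of the union of all walls. -/
def IsAlcove (Φ : Set (E m)) (C : Set (E m)) : Prop :=
  ∃ x ∈ (allWalls Φ)ᶜ, C = connectedComponentIn (allWalls Φ)ᶜ x

/-- The set `𝒲` of walls removed when forming geodesic tubes of direction `β∨`: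
all walls `H_{α,k}` with `⟨α, β∨⟩ = 0` (equivalently `α ∈ Φ_I`). -/
def tubeWalls (Φ : Set (E m)) (β : E m) : Set (E m) :=
  ⋃ α ∈ {α ∈ Φ | ⟪α, β⟫ = (0:ℝ)}, ⋃ k : ℤ, wall α k

/-- A geodesic tube of direction `β∨`: a connected component of `A ∖ ⋃𝒲`. -/
def IsGeodesicTube (Φ : Set (E m)) (β : E m) (T : Set (E m)) : Prop :=
  ∃ x ∈ (tubeWalls Φ β)ᶜ, T = connectedComponentIn (tubeWalls Φ β)ᶜ x

/-- `d_γ = inf_x d(x, γx)`. -/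
def minDisp (f : E m → E m) : ℝ := ⨅ x, dist x (f x)

/-- `Min(γ) = {x : d(x,γx) = d_γ}`. -/
def minSet (f : E m → E m) : Set (E m) := {x | dist x (f x) = minDisp f}

/-- A hyperbolic isometry: semisimple (`Min` nonempty) with `d_γ > 0`. -/
def IsHyperbolic (f : E m → E m) : Prop := (minSet f).Nonempty ∧ 0 < minDisp f

/-- `v` is the vector by which `γ` translates its min set. -/
def HasTransVec (f : E m → E m) (v : E m) : Prop := ∀ x ∈ minSet f, f x = x + v

/-- `x` is the barycenter of the polysimplex `s`: the average of the vertices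
(extreme points of the closure) of `s`. -/
def IsBarycenter (s : Set (E m)) (x : E m) : Prop :=
  ∃ F : Finset (E m), (F : Set (E m)) = Set.extremePoints ℝ (closure s) ∧ F.Nonempty ∧
    x = (F.card : ℝ)⁻¹ • ∑ y ∈ F, y

/-- The centerline `ℒ = x + ℝ β∨`. -/
def centerline (x β : E m) : Set (E m) := {p | ∃ t : ℝ, p = x + t • β}



/-! ### Auxiliary material -/

section Reflections
variable {m : ℕ}

lemma inner_coroot_self {α : E m} (hα : α ≠ 0) : ⟪α, coroot α⟫ = (2:ℝ) := by
  have hαα : ⟪α, α⟫ ≠ (0:ℝ) := (inner_self_ne_zero (𝕜 := ℝ)).mpr hα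
  unfold coroot
  rw [real_inner_smul_right, div_mul_cancel₀ _ hαα]

/-- The linear reflection across the hyperplane `α^⊥`. -/
def reflLin (α : E m) : E m →ₗ[ℝ] E m where
  toFun x := x - ⟪α, x⟫ • coroot α
  map_add' x y := by
    simp only [inner_add_right, add_smul]
    abel
  map_smul' c x := by
    simp only [real_inner_smul_right, RingHom.id_apply, smul_sub, smul_smul]

lemma reflLin_apply (α x : E m) : reflLin α x = x - ⟪α, x⟫ • coroot α := rfl

lemma reflLin_eq_affReflFun (α : E m) : ⇑(reflLin α) = affReflFun α 0 := by
  funext x; simp [reflLin_apply, affReflFun]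

lemma reflLin_involutive (α : E m) : Function.Involutive ⇑(reflLin α) := by
  rw [reflLin_eq_affReflFun]; exact affReflFun_involutive α 0

lemma reflLin_inner (α : E m) (x y : E m) : ⟪reflLin α x, reflLin α y⟫ = ⟪x, y⟫ := by
  by_cases hα : α = 0
  · simp [reflLin_apply, hα, coroot]
  · have hαα : ⟪α, α⟫ ≠ (0:ℝ) := (inner_self_ne_zero (𝕜 := ℝ)).mpr hα
    have h1 : ⟪x, coroot α⟫ = 2 / ⟪α,α⟫ * ⟪α, x⟫ := by
      rw [coroot, real_inner_smul_right, real_inner_comm x α]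
    have h2 : ⟪coroot α, y⟫ = 2 / ⟪α,α⟫ * ⟪α, y⟫ := by
      rw [coroot, real_inner_smul_left]
    have h3 : ⟪coroot α, coroot α⟫ = 2/⟪α,α⟫ * (2/⟪α,α⟫ * ⟪α,α⟫) := by
      rw [coroot, real_inner_smul_left, real_inner_smul_right]
    rw [reflLin_apply, reflLin_apply, inner_sub_left, inner_sub_right, inner_sub_right]
    simp only [real_inner_smul_left, real_inner_smul_right]
    rw [h1, h2, h3]
    set d : ℝ := ⟪α,α⟫ with hd
    set a : ℝ := ⟪α,x⟫ with ha
    set b : ℝ := ⟪α,y⟫ with hb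
    field_simp
    ring

/-- The linear reflection across `α^⊥` as a linear isometry equivalence. -/
def reflIso (α : E m) : E m ≃ₗᵢ[ℝ] E m :=
  ⟨LinearEquiv.ofInvolutive (reflLin α) (reflLin_involutive α), fun x => by
    have h : ⟪reflLin α x, reflLin α x⟫ = ⟪x, x⟫ := reflLin_inner α x x
    show ‖reflLin α x‖ = ‖x‖
    rw [← Real.sqrt_mul_self (norm_nonneg (reflLin α x)), ← Real.sqrt_mul_self (norm_nonneg x),
      ← real_inner_self_eq_norm_mul_norm, ← real_inner_self_eq_norm_mul_norm, h]⟩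

lemma reflIso_apply (α x : E m) : reflIso α x = x - ⟪α, x⟫ • coroot α := rfl

/-- An affine representation of a map: `g x = L x + b` with `L` a linear isometry
preserving `Φ` (in both directions) and `b` having integral pairings with all roots. -/
def AffRep (Φ : Set (E m)) (g : E m → E m) : Prop :=
  ∃ L : E m ≃ₗᵢ[ℝ] E m, ∃ b : E m, (∀ x, g x = L x + b) ∧ (∀ γ ∈ Φ, L γ ∈ Φ) ∧
    (∀ γ ∈ Φ, L.symm γ ∈ Φ) ∧ (∀ γ ∈ Φ, ∃ z : ℤ, ⟪γ, b⟫ = (z : ℝ))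

lemma affRep_of_mem_Waff {Φ : Set (E m)} (hΦ : IsRootSystem Φ) {w : Equiv.Perm (E m)}
    (hw : w ∈ Waff Φ) : AffRep Φ ⇑w := by
  induction hw using Subgroup.closure_induction with
  | mem g hg =>
    obtain ⟨α, hα, k, rfl⟩ := hg
    have hα0 : α ≠ 0 := hΦ.ne_zero α hα
    refine ⟨reflIso α, (k:ℝ) • coroot α, ?_, ?_, ?_, ?_⟩
    · intro x
      show affReflFun α k x = reflIso α x + (k:ℝ) • coroot α
      rw [affReflFun, reflIso_apply, sub_smul]
      abel
    · intro γ hγ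
      rw [reflIso_apply]
      exact hΦ.reflect_mem α hα γ hγ
    · intro γ hγ
      have hLL : reflIso α (reflIso α γ) = γ := reflLin_involutive α γ
      have hsymm : (reflIso α).symm γ = reflIso α γ := by
        conv_lhs => rw [← hLL]
        rw [LinearIsometryEquiv.symm_apply_apply]
      rw [hsymm, reflIso_apply]
      exact hΦ.reflect_mem α hα γ hγ
    · intro γ hγ
      obtain ⟨z, hz⟩ := hΦ.crystallographic γ hγ α hα
      exact ⟨k * z, by rw [real_inner_smul_right, hz]; push_cast; ring⟩
  | one =>
    exact ⟨LinearIsometryEquiv.refl ℝ (E m), 0, by simp, fun γ h => h, fun γ h => h,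
      fun γ _ => ⟨0, by simp⟩⟩
  | mul a b _ _ iha ihb =>
    obtain ⟨L₁, b₁, h₁, hs₁, hs₁', hb₁⟩ := iha
    obtain ⟨L₂, b₂, h₂, hs₂, hs₂', hb₂⟩ := ihb
    refine ⟨L₂.trans L₁, L₁ b₂ + b₁, ?_, ?_, ?_, ?_⟩
    · intro x
      rw [Equiv.Perm.mul_apply, h₁, h₂, LinearIsometryEquiv.trans_apply, map_add]
      abel
    · intro γ hγ
      rw [LinearIsometryEquiv.trans_apply]
      exact hs₁ _ (hs₂ γ hγ)
    · intro γ hγ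
      rw [LinearIsometryEquiv.symm_trans, LinearIsometryEquiv.trans_apply]
      exact hs₂' _ (hs₁' γ hγ)
    · intro γ hγ
      obtain ⟨z₁, hz₁⟩ := hb₁ γ hγ
      obtain ⟨z₂, hz₂⟩ := hb₂ (L₁.symm γ) (hs₁' γ hγ)
      refine ⟨z₂ + z₁, ?_⟩
      have : ⟪γ, L₁ b₂⟫ = ⟪L₁.symm γ, b₂⟫ := by
        conv_lhs => rw [← L₁.apply_symm_apply γ]
        rw [L₁.inner_map_map]
      rw [inner_add_right, this, hz₁, hz₂]
      push_cast; ring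
  | inv a _ ih =>
    obtain ⟨L, b, h, hs, hs', hb⟩ := ih
    refine ⟨L.symm, -(L.symm b), ?_, hs', ?_, ?_⟩
    · intro x
      have key : a (L.symm x + -(L.symm b)) = x := by
        rw [h, map_add, map_neg, L.apply_symm_apply, L.apply_symm_apply]
        abel
      conv_lhs => rw [← key]
      rw [Equiv.Perm.inv_def, Equiv.symm_apply_apply]
    · intro γ hγ
      rw [LinearIsometryEquiv.symm_symm]
      exact hs γ hγ
    · intro γ hγ
      obtain ⟨z, hz⟩ := hb (L γ) (hs γ hγ)
      refine ⟨-z, ?_⟩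
      have : ⟪γ, L.symm b⟫ = ⟪L γ, b⟫ := by
        rw [← L.inner_map_map γ (L.symm b), L.apply_symm_apply]
      rw [inner_neg_right, this, hz]
      push_cast; ring

end Reflections


section Tube
variable {m : ℕ}

/-- The open box determined by a base point, which will be shown to be the geodesic tube. -/
def tubeBox (Φ : Set (E m)) (β x₀ : E m) : Set (E m) :=
  {y | ∀ α ∈ Φ, ⟪α, β⟫ = 0 → (⌊⟪α, x₀⟫⌋ : ℝ) < ⟪α, y⟫ ∧ ⟪α, y⟫ < ⌊⟪α, x₀⟫⌋ + 1}

lemma not_mem_tubeWalls_iff {Φ : Set (E m)} {β y : E m} :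
    y ∈ (tubeWalls Φ β)ᶜ ↔ ∀ α ∈ Φ, ⟪α, β⟫ = 0 → ∀ k : ℤ, ⟪α, y⟫ ≠ (k:ℝ) := by
  simp only [tubeWalls, Set.mem_compl_iff, Set.mem_iUnion, Set.mem_setOf_eq, wall]
  push_neg
  exact ⟨fun h α hα hβ k => h α ⟨hα, hβ⟩ k, fun h α hα k => h α hα.1 hα.2 k⟩

lemma tubeBox_decomp (Φ : Set (E m)) (β x₀ : E m) :
    tubeBox Φ β x₀ = ⋂ α ∈ Φ,
      {y | ⟪α, β⟫ = 0 → ((⌊⟪α, x₀⟫⌋ : ℝ) < ⟪α, y⟫ ∧ ⟪α, y⟫ < ⌊⟪α, x₀⟫⌋ + 1)} := by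
  ext y; simp [tubeBox]

lemma isOpen_tubeBox {Φ : Set (E m)} (hfin : Φ.Finite) (β x₀ : E m) :
    IsOpen (tubeBox Φ β x₀) := by
  rw [tubeBox_decomp]
  refine hfin.isOpen_biInter (fun α hα => ?_)
  by_cases hβ : ⟪α, β⟫ = (0:ℝ)
  · have : {y : E m | ⟪α, β⟫ = 0 → ((⌊⟪α, x₀⟫⌋ : ℝ) < ⟪α, y⟫ ∧ ⟪α, y⟫ < ⌊⟪α, x₀⟫⌋ + 1)} =
        (fun y : E m => ⟪α, y⟫) ⁻¹' (Set.Ioo (⌊⟪α, x₀⟫⌋ : ℝ) ((⌊⟪α, x₀⟫⌋ : ℝ) + 1)) := by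
      ext y; simp [hβ, Set.mem_Ioo]
    rw [this]
    exact isOpen_Ioo.preimage (Continuous.inner continuous_const continuous_id)
  · have : {y : E m | ⟪α, β⟫ = 0 → ((⌊⟪α, x₀⟫⌋ : ℝ) < ⟪α, y⟫ ∧ ⟪α, y⟫ < ⌊⟪α, x₀⟫⌋ + 1)} =
        Set.univ := by
      ext y
      simp only [Set.mem_setOf_eq, Set.mem_univ, iff_true]
      intro h; exact absurd h hβ
    rw [this]; exact isOpen_univ

lemma convex_tubeBox (Φ : Set (E m)) (β x₀ : E m) : Convex ℝ (tubeBox Φ β x₀) := by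
  rw [tubeBox_decomp]
  refine convex_iInter fun α => convex_iInter fun hα => ?_
  by_cases hβ : ⟪α, β⟫ = (0:ℝ)
  · have : {y : E m | ⟪α, β⟫ = 0 → ((⌊⟪α, x₀⟫⌋ : ℝ) < ⟪α, y⟫ ∧ ⟪α, y⟫ < ⌊⟪α, x₀⟫⌋ + 1)} =
        ((innerSL ℝ α).toLinearMap) ⁻¹' (Set.Ioo (⌊⟪α, x₀⟫⌋ : ℝ) ((⌊⟪α, x₀⟫⌋ : ℝ) + 1)) := by
      ext y; simp [hβ, Set.mem_Ioo]
    rw [this]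
    exact (convex_Ioo _ _).linear_preimage _
  · have : {y : E m | ⟪α, β⟫ = 0 → ((⌊⟪α, x₀⟫⌋ : ℝ) < ⟪α, y⟫ ∧ ⟪α, y⟫ < ⌊⟪α, x₀⟫⌋ + 1)} =
        Set.univ := by
      ext y
      simp only [Set.mem_setOf_eq, Set.mem_univ, iff_true]
      intro h; exact absurd h hβ
    rw [this]; exact convex_univ

lemma tubeBox_subset_compl {Φ : Set (E m)} {β x₀ : E m} :
    tubeBox Φ β x₀ ⊆ (tubeWalls Φ β)ᶜ := by
  intro y hy
  rw [not_mem_tubeWalls_iff]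
  intro α hα hβ k hk
  obtain ⟨h1, h2⟩ := hy α hα hβ
  rw [hk] at h1 h2
  have h1' : ⌊⟪α, x₀⟫⌋ < k := by exact_mod_cast h1
  have h2' : k < ⌊⟪α, x₀⟫⌋ + 1 := by exact_mod_cast (by push_cast; linarith : (k:ℝ) < ((⌊⟪α, x₀⟫⌋ + 1 : ℤ) : ℝ))
  omega

lemma mem_tubeBox_self {Φ : Set (E m)} {β x₀ : E m} (hx₀ : x₀ ∈ (tubeWalls Φ β)ᶜ) :
    x₀ ∈ tubeBox Φ β x₀ := by
  intro α hα hβ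
  have hne := not_mem_tubeWalls_iff.mp hx₀ α hα hβ ⌊⟪α, x₀⟫⌋
  exact ⟨lt_of_le_of_ne (Int.floor_le _) (Ne.symm hne), Int.lt_floor_add_one _⟩

lemma tube_eq_tubeBox {Φ : Set (E m)} (hfin : Φ.Finite) {β x₀ : E m}
    (hx₀ : x₀ ∈ (tubeWalls Φ β)ᶜ) :
    connectedComponentIn (tubeWalls Φ β)ᶜ x₀ = tubeBox Φ β x₀ := by
  have hnoint : ∀ y ∈ (tubeWalls Φ β)ᶜ, ∀ α ∈ Φ, ⟪α,β⟫ = (0:ℝ) → ∀ k:ℤ, ⟪α,y⟫ ≠ (k:ℝ) :=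
    fun y hy => not_mem_tubeWalls_iff.mp hy
  apply Set.Subset.antisymm
  · intro y hy α hα hβ
    have hTpre : IsPreconnected (connectedComponentIn (tubeWalls Φ β)ᶜ x₀) :=
      isPreconnected_connectedComponentIn
    have hx₀T : x₀ ∈ connectedComponentIn (tubeWalls Φ β)ᶜ x₀ := mem_connectedComponentIn hx₀
    have hTsub := connectedComponentIn_subset (tubeWalls Φ β)ᶜ x₀
    have hf : ContinuousOn (fun z : E m => ⟪α, z⟫) (connectedComponentIn (tubeWalls Φ β)ᶜ x₀) :=
      (Continuous.inner continuous_const continuous_id).continuousOn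
    have himg : Set.OrdConnected ((fun z : E m => ⟪α,z⟫) '' connectedComponentIn (tubeWalls Φ β)ᶜ x₀) :=
      (hTpre.image _ hf).ordConnected
    have hymem : ⟪α,y⟫ ∈ (fun z : E m => ⟪α,z⟫) '' connectedComponentIn (tubeWalls Φ β)ᶜ x₀ :=
      Set.mem_image_of_mem _ hy
    have hx0mem : ⟪α,x₀⟫ ∈ (fun z : E m => ⟪α,z⟫) '' connectedComponentIn (tubeWalls Φ β)ᶜ x₀ :=
      Set.mem_image_of_mem _ hx₀T
    have hne : ∀ k : ℤ, ((k:ℝ)) ∉ (fun z : E m => ⟪α,z⟫) '' connectedComponentIn (tubeWalls Φ β)ᶜ x₀ := by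
      rintro k ⟨z, hz, hzk⟩
      exact hnoint z (hTsub hz) α hα hβ k hzk
    have hfl : (⌊⟪α,x₀⟫⌋:ℝ) < ⟪α,x₀⟫ :=
      lt_of_le_of_ne (Int.floor_le _) (Ne.symm (hnoint x₀ hx₀ α hα hβ _))
    constructor
    · by_contra hle
      push_neg at hle
      have hmem : (⌊⟪α,x₀⟫⌋:ℝ) ∈ Set.Icc ⟪α,y⟫ ⟪α,x₀⟫ := ⟨hle, Int.floor_le _⟩
      exact hne _ (himg.out hymem hx0mem hmem)
    · by_contra hle
      push_neg at hle
      have hmem : ((⌊⟪α,x₀⟫⌋:ℝ)+1) ∈ Set.Icc ⟪α,x₀⟫ ⟪α,y⟫ := ⟨(Int.lt_floor_add_one _).le, hle⟩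
      have := himg.out hx0mem hymem hmem
      refine hne (⌊⟪α,x₀⟫⌋ + 1) ?_
      push_cast
      exact this
  · exact (convex_tubeBox Φ β x₀).isPreconnected.subset_connectedComponentIn
      (mem_tubeBox_self hx₀) tubeBox_subset_compl

lemma tubeBox_add_smul {Φ : Set (E m)} {β x₀ : E m} {y : E m} (hy : y ∈ tubeBox Φ β x₀)
    (t : ℝ) : y + t • β ∈ tubeBox Φ β x₀ := by
  intro α hα hβ
  have h := hy α hα hβ
  rw [inner_add_right, real_inner_smul_right, hβ, mul_zero, add_zero]
  exact h

end Tube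


section MinSetFacts
variable {m : ℕ}

lemma minDisp_le (f : E m → E m) (y : E m) : minDisp f ≤ dist y (f y) :=
  ciInf_le ⟨0, by rintro r ⟨z, rfl⟩; exact dist_nonneg⟩ y

lemma mem_minSet_of_le {f : E m → E m} {y : E m} (h : ∀ z, dist y (f y) ≤ dist z (f z)) :
    y ∈ minSet f :=
  le_antisymm (le_ciInf h) (minDisp_le f y)

lemma affRep_dist {f : E m → E m} {L : E m ≃ₗᵢ[ℝ] E m} {b : E m}
    (hrep : ∀ x, f x = L x + b) (x y : E m) : dist (f x) (f y) = dist x y := by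
  rw [hrep, hrep, dist_eq_norm, dist_eq_norm]
  have h : (L x + b) - (L y + b) = L (x - y) := by rw [map_sub]; abel
  rw [h, L.norm_map]

lemma minset_facts {f : E m → E m} {L : E m ≃ₗᵢ[ℝ] E m} {b : E m}
    (hrep : ∀ x, f x = L x + b) (hhyp : IsHyperbolic f) {v : E m} (hv : HasTransVec f v) :
    v ≠ 0 ∧ L v = v ∧
      ∀ y ∈ minSet f, ∀ t : ℝ, y + t • v ∈ minSet f ∧ f (y + t • v) = y + t • v + v := by
  obtain ⟨⟨p, hp⟩, hpos⟩ := hhyp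
  have hfp : f p = p + v := hv p hp
  have hdistv : ∀ a : E m, dist a (a + v) = ‖v‖ := by
    intro a; rw [dist_eq_norm]; simp
  have hnv : ‖v‖ = minDisp f := by rw [← hp, hfp, hdistv]
  have hv0 : v ≠ 0 := by
    intro h
    rw [h, norm_zero] at hnv
    linarith
  have hstep : ∀ (y : E m) (t : ℝ), f (y + t • v) = f y + t • L v := by
    intro y t
    rw [hrep, hrep, map_add, map_smul]
    abel
  have hLpb : L p + b = p + v := by rw [← hrep p, hfp]
  have h1 : f (p + v) = (p + v) + L v := by
    rw [hrep, map_add, ← hLpb]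
    abel
  have hpv : p + v ∈ minSet f := by
    show dist (p + v) (f (p + v)) = minDisp f
    rw [h1, dist_eq_norm]
    have : (p + v) - ((p + v) + L v) = -(L v) := by abel
    rw [this, norm_neg, L.norm_map, hnv]
  have hLv : L v = v := by
    have h2 : f (p + v) = (p + v) + v := hv _ hpv
    exact add_left_cancel (h1.symm.trans h2)
  refine ⟨hv0, hLv, fun y hy t => ?_⟩
  have h1 : f (y + t • v) = y + t • v + v := by
    rw [hstep, hLv, hv y hy]
    abel
  refine ⟨?_, h1⟩
  show dist (y + t • v) (f (y + t • v)) = minDisp f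
  rw [h1, hdistv, hnv]

end MinSetFacts

section Perp
variable {m : ℕ}

lemma coweight_ne_zero {B ω : Fin m → E m} (hω : IsFundamentalCoweights B ω) (i : Fin m) :
    ω i ≠ 0 := by
  intro h
  have h1 := hω i i
  rw [h, if_pos rfl] at h1
  simp at h1

lemma perp_span {B ω : Fin m → E m} (hind : LinearIndependent ℝ B)
    (hω : IsFundamentalCoweights B ω) (i : Fin m) {u : E m}
    (hu : ∀ j, j ≠ i → ⟪B j, u⟫ = 0) : ∃ c : ℝ, u = c • ω i := by
  classical
  have hωi0 : ω i ≠ 0 := coweight_ne_zero hω i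
  set U : Submodule ℝ (E m) :=
    Submodule.span ℝ (Set.range (B ∘ (Subtype.val : {j : Fin m // j ≠ i} → Fin m))) with hU
  have key : ∀ w : E m, (∀ j, j ≠ i → ⟪B j, w⟫ = 0) → w ∈ Uᗮ := by
    intro w hw
    rw [Submodule.mem_orthogonal]
    intro z hz
    have hle : U ≤ (ℝ ∙ w)ᗮ := by
      rw [hU, Submodule.span_le]
      rintro _ ⟨j, rfl⟩
      rw [SetLike.mem_coe, Submodule.mem_orthogonal_singleton_iff_inner_right,
        real_inner_comm]
      exact hw j.1 j.2
    have := hle hz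
    rw [Submodule.mem_orthogonal_singleton_iff_inner_right] at this
    rw [real_inner_comm]
    exact this
  have hωiU : ω i ∈ Uᗮ := key (ω i) (fun j hj => by rw [hω j i, if_neg hj])
  have huU : u ∈ Uᗮ := key u hu
  have hm : 0 < m := i.pos
  have hfrU : Module.finrank ℝ U = m - 1 := by
    rw [hU, finrank_span_eq_card (hind.comp _ Subtype.val_injective)]
    rw [Fintype.card_subtype_compl, Fintype.card_subtype_eq, Fintype.card_fin]
  have hsum := Submodule.finrank_add_finrank_orthogonal U
  rw [hfrU, finrank_euclideanSpace_fin] at hsum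
  have hfrUp : Module.finrank ℝ (Uᗮ : Submodule ℝ (E m)) = 1 := by omega
  have hle : (ℝ ∙ ω i) ≤ Uᗮ := by
    rw [Submodule.span_le, Set.singleton_subset_iff]
    exact hωiU
  have heq : (ℝ ∙ ω i) = Uᗮ := by
    refine Submodule.eq_of_le_of_finrank_le hle ?_
    rw [hfrUp, finrank_span_singleton hωi0]
  rw [← heq] at huU
  obtain ⟨c, hc⟩ := Submodule.mem_span_singleton.mp huU
  exact ⟨c, hc.symm⟩

end Perp


section Slice
variable {m : ℕ}

lemma slice_bounded {Φ : Set (E m)} {B ω : Fin m → E m}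
    (hB : IsSimpleSystem Φ B) (hω : IsFundamentalCoweights B ω) (i : Fin m) (x₀ : E m) :
    Bornology.IsBounded (tubeBox Φ (ω i) x₀ ∩ {y : E m | ⟪ω i, y⟫ = (0:ℝ)}) := by
  classical
  set G : Fin m → E m := fun j => if j = i then ω i else B j with hG
  set Ψ : E m →ₗ[ℝ] (Fin m → ℝ) :=
    LinearMap.pi (fun j => ((innerSL ℝ (G j)).toLinearMap)) with hΨ
  have hΨapp : ∀ (y : E m) (j : Fin m), Ψ y j = ⟪G j, y⟫ := fun y j => rfl
  have hker : LinearMap.ker Ψ = ⊥ := by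
    rw [LinearMap.ker_eq_bot']
    intro y hy
    have hyj : ∀ j, ⟪G j, y⟫ = 0 := by
      intro j
      rw [← hΨapp y j, hy]
      rfl
    obtain ⟨c, hc⟩ := perp_span hB.indep hω i
      (u := y) (fun j hj => by have h := hyj j; simpa [hG, hj] using h)
    have h := hyj i
    simp only [hG, if_pos rfl] at h
    rw [hc, real_inner_smul_right] at h
    have hωi0 : ⟪ω i, ω i⟫ ≠ (0:ℝ) :=
      (inner_self_ne_zero (𝕜 := ℝ)).mpr (coweight_ne_zero hω i)
    have hc0 : c = 0 := by
      rcases mul_eq_zero.mp h with h' | h'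
      · exact h'
      · exact absurd h' hωi0
    rw [hc, hc0, zero_smul]
  obtain ⟨K, hK0, hKa⟩ := Ψ.exists_antilipschitzWith hker
  set M : ℝ := ∑ j : Fin m, (|(⌊⟪B j, x₀⟫⌋ : ℝ)| + 1) with hM
  have hM0 : 0 ≤ M := Finset.sum_nonneg (fun j _ => by positivity)
  have himg : Ψ '' (tubeBox Φ (ω i) x₀ ∩ {y : E m | ⟪ω i, y⟫ = (0:ℝ)}) ⊆
      Metric.closedBall 0 M := by
    rintro _ ⟨y, ⟨hybox, hyH⟩, rfl⟩
    rw [Metric.mem_closedBall, dist_zero_right]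
    rw [pi_norm_le_iff_of_nonneg hM0]
    intro j
    rw [hΨapp, Real.norm_eq_abs]
    by_cases hj : j = i
    · subst hj
      have hGj : G j = ω j := by simp [hG]
      rw [hGj, hyH]
      simpa using hM0
    · have hGj : G j = B j := by simp [hG, hj]
      rw [hGj]
      have hBj : B j ∈ Φ := hB.mem j
      have hBjω : ⟪B j, ω i⟫ = 0 := by rw [hω j i, if_neg hj]
      obtain ⟨h1, h2⟩ := hybox (B j) hBj hBjω
      have hle : |⟪B j, y⟫| ≤ |(⌊⟪B j, x₀⟫⌋ : ℝ)| + 1 := by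
        rw [abs_le]
        constructor
        · have := neg_abs_le ((⌊⟪B j, x₀⟫⌋ : ℝ))
          linarith
        · have := le_abs_self ((⌊⟪B j, x₀⟫⌋ : ℝ))
          linarith
      refine hle.trans ?_
      exact Finset.single_le_sum (f := fun j => |(⌊⟪B j, x₀⟫⌋ : ℝ)| + 1)
        (fun _ _ => by positivity) (Finset.mem_univ j)
  have hbd : Bornology.IsBounded (Ψ '' (tubeBox Φ (ω i) x₀ ∩ {y : E m | ⟪ω i, y⟫ = (0:ℝ)})) :=
    (Metric.isBounded_closedBall).subset himg
  have hsub : tubeBox Φ (ω i) x₀ ∩ {y : E m | ⟪ω i, y⟫ = (0:ℝ)} ⊆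
      Ψ ⁻¹' (Ψ '' (tubeBox Φ (ω i) x₀ ∩ {y : E m | ⟪ω i, y⟫ = (0:ℝ)})) :=
    Set.subset_preimage_image _ _
  exact (hKa.isBounded_preimage hbd).subset hsub

end Slice


section Barycenter
variable {m : ℕ}

lemma hyperplane_convex (β : E m) : Convex ℝ {y : E m | ⟪β, y⟫ = (0:ℝ)} := by
  intro y hy z hz a b ha hb hab
  simp only [Set.mem_setOf_eq] at *
  rw [inner_add_right, real_inner_smul_right, real_inner_smul_right, hy, hz]
  ring

lemma hyperplane_closed (β : E m) : IsClosed {y : E m | ⟪β, y⟫ = (0:ℝ)} :=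
  isClosed_eq (Continuous.inner continuous_const continuous_id) continuous_const

lemma barycenter_mem_tube {Φ : Set (E m)} {B ω : Fin m → E m}
    (hB : IsSimpleSystem Φ B) (hω : IsFundamentalCoweights B ω) (i : Fin m)
    {x₀ : E m} (hx₀ : x₀ ∈ (tubeWalls Φ (ω i))ᶜ) {x : E m}
    (hx : IsBarycenter (tubeBox Φ (ω i) x₀ ∩ {y : E m | ⟪ω i, y⟫ = (0:ℝ)}) x) :
    x ∈ tubeBox Φ (ω i) x₀ ∧ ⟪ω i, x⟫ = 0 := by
  classical
  obtain ⟨F, hFe, hFne, hxe⟩ := hx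
  set s := tubeBox Φ (ω i) x₀ ∩ {y : E m | ⟪ω i, y⟫ = (0:ℝ)} with hs
  set K := closure s with hK
  have hsconv : Convex ℝ s := (convex_tubeBox Φ (ω i) x₀).inter (hyperplane_convex (ω i))
  have hKconv : Convex ℝ K := hsconv.closure
  have hKcomp : IsCompact K :=
    Metric.isCompact_of_isClosed_isBounded isClosed_closure
      ((slice_bounded hB hω i x₀).closure)
  have hFK : ∀ e ∈ F, e ∈ K := by
    intro e he
    have he' : e ∈ Set.extremePoints ℝ K := by
      rw [← hFe]; exact Finset.mem_coe.mpr he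
    exact extremePoints_subset he'
  have hKbound : ∀ e ∈ K, ∀ α ∈ Φ, ⟪α, ω i⟫ = (0:ℝ) →
      (⌊⟪α, x₀⟫⌋ : ℝ) ≤ ⟪α, e⟫ ∧ ⟪α, e⟫ ≤ (⌊⟪α, x₀⟫⌋ : ℝ) + 1 := by
    intro e he α hα hαβ
    have hsub : s ⊆ (fun y : E m => ⟪α, y⟫) ⁻¹'
        Set.Icc ((⌊⟪α, x₀⟫⌋ : ℝ)) ((⌊⟪α, x₀⟫⌋ : ℝ) + 1) := by
      intro y hy
      obtain ⟨h1, h2⟩ := hy.1 α hα hαβ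
      exact ⟨h1.le, h2.le⟩
    have hcl : IsClosed ((fun y : E m => ⟪α, y⟫) ⁻¹'
        Set.Icc ((⌊⟪α, x₀⟫⌋ : ℝ)) ((⌊⟪α, x₀⟫⌋ : ℝ) + 1)) :=
      isClosed_Icc.preimage (Continuous.inner continuous_const continuous_id)
    exact closure_minimal hsub hcl he
  have hKH : ∀ e ∈ K, ⟪ω i, e⟫ = 0 := by
    intro e he
    exact closure_minimal (fun y hy => hy.2) (hyperplane_closed (ω i)) he
  have hsne : s.Nonempty := by
    obtain ⟨e, he⟩ := hFne
    exact closure_nonempty_iff.mp ⟨e, hFK e he⟩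
  obtain ⟨q, hq⟩ := hsne
  have hqK : q ∈ K := subset_closure hq
  have hKM : closure (convexHull ℝ (Set.extremePoints ℝ K)) = K :=
    closure_convexHull_extremePoints hKcomp hKconv
  have hcard : (0:ℝ) < (F.card : ℝ) := by
    exact_mod_cast Finset.card_pos.mpr hFne
  have hxH : ⟪ω i, x⟫ = 0 := by
    rw [hxe, real_inner_smul_right, inner_sum]
    rw [Finset.sum_congr rfl (fun e he => hKH e (hFK e he))]
    simp
  refine ⟨?_, hxH⟩
  intro α hα hαβ
  have hxin : ⟪α, x⟫ = (F.card : ℝ)⁻¹ * ∑ e ∈ F, ⟪α, e⟫ := by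
    rw [hxe, real_inner_smul_right, inner_sum]
  have hexlow : ∃ e ∈ F, (⌊⟪α, x₀⟫⌋ : ℝ) < ⟪α, e⟫ := by
    by_contra hcon
    push_neg at hcon
    have hC : K ⊆ {y : E m | ⟪α, y⟫ ≤ (⌊⟪α, x₀⟫⌋ : ℝ)} := by
      rw [← hKM]
      refine closure_minimal (convexHull_min ?_ ?_) ?_
      · intro e he
        rw [← hFe] at he
        exact hcon e (Finset.mem_coe.mp he)
      · intro y hy z hz a b ha hb hab
        simp only [Set.mem_setOf_eq] at hy hz ⊢
        rw [inner_add_right, real_inner_smul_right, real_inner_smul_right]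
        have hl : a * ((⌊⟪α, x₀⟫⌋:ℝ)) + b * ((⌊⟪α, x₀⟫⌋:ℝ)) = ((⌊⟪α, x₀⟫⌋:ℝ)) := by
          rw [← add_mul, hab, one_mul]
        have h1 := mul_le_mul_of_nonneg_left hy ha
        have h2 := mul_le_mul_of_nonneg_left hz hb
        linarith
      · exact isClosed_le (Continuous.inner continuous_const continuous_id) continuous_const
    have h1 := (hq.1 α hα hαβ).1
    have h2 := hC hqK
    simp only [Set.mem_setOf_eq] at h2
    linarith
  have hexhigh : ∃ e ∈ F, ⟪α, e⟫ < (⌊⟪α, x₀⟫⌋ : ℝ) + 1 := by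
    by_contra hcon
    push_neg at hcon
    have hC : K ⊆ {y : E m | (⌊⟪α, x₀⟫⌋ : ℝ) + 1 ≤ ⟪α, y⟫} := by
      rw [← hKM]
      refine closure_minimal (convexHull_min ?_ ?_) ?_
      · intro e he
        rw [← hFe] at he
        exact hcon e (Finset.mem_coe.mp he)
      · intro y hy z hz a b ha hb hab
        simp only [Set.mem_setOf_eq] at hy hz ⊢
        rw [inner_add_right, real_inner_smul_right, real_inner_smul_right]
        have hl : a * ((⌊⟪α, x₀⟫⌋:ℝ) + 1) + b * ((⌊⟪α, x₀⟫⌋:ℝ) + 1) = ((⌊⟪α, x₀⟫⌋:ℝ) + 1) := by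
          rw [← add_mul, hab, one_mul]
        have h1 := mul_le_mul_of_nonneg_left hy ha
        have h2 := mul_le_mul_of_nonneg_left hz hb
        linarith
      · exact isClosed_le continuous_const (Continuous.inner continuous_const continuous_id)
    have h1 := (hq.1 α hα hαβ).2
    have h2 := hC hqK
    simp only [Set.mem_setOf_eq] at h2
    linarith
  constructor
  · obtain ⟨e₀, he₀, he₀s⟩ := hexlow
    have hsum1 : (F.card : ℝ) * (⌊⟪α, x₀⟫⌋ : ℝ) < ∑ e ∈ F, ⟪α, e⟫ := by
      have h := Finset.sum_lt_sum (f := fun _ : E m => (⌊⟪α, x₀⟫⌋ : ℝ))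
        (g := fun e => ⟪α, e⟫)
        (fun e he => (hKbound e (hFK e he) α hα hαβ).1) ⟨e₀, he₀, he₀s⟩
      simpa [Finset.sum_const, nsmul_eq_mul] using h
    have h := mul_lt_mul_of_pos_left hsum1 (inv_pos.mpr hcard)
    rw [← mul_assoc, inv_mul_cancel₀ hcard.ne', one_mul] at h
    rw [hxin]
    exact h
  · obtain ⟨e₀, he₀, he₀s⟩ := hexhigh
    have hsum1 : ∑ e ∈ F, ⟪α, e⟫ < (F.card : ℝ) * ((⌊⟪α, x₀⟫⌋ : ℝ) + 1) := by
      have h := Finset.sum_lt_sum (f := fun e => ⟪α, e⟫)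
        (g := fun _ : E m => (⌊⟪α, x₀⟫⌋ : ℝ) + 1)
        (fun e he => (hKbound e (hFK e he) α hα hαβ).2) ⟨e₀, he₀, he₀s⟩
      have h2 : (F.card : ℝ) * ((⌊⟪α, x₀⟫⌋ : ℝ) + 1) = (F.card : ℝ) * (⌊⟪α, x₀⟫⌋ : ℝ) + (F.card : ℝ) := by ring
      rw [h2]
      simpa [Finset.sum_const, nsmul_eq_mul, mul_add] using h
    have h := mul_lt_mul_of_pos_left hsum1 (inv_pos.mpr hcard)
    rw [← mul_assoc, inv_mul_cancel₀ hcard.ne', one_mul] at h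
    rw [hxin]
    exact h

end Barycenter


section Misc
variable {m : ℕ}

lemma extremePoints_image_subset {K : Set (E m)} {φ : E m → E m} (A : E m →ₗ[ℝ] E m) (d : E m)
    (hφ : ∀ y, φ y = A y + d) (hinj : Function.Injective φ) (himg : φ '' K = K) :
    φ '' Set.extremePoints ℝ K ⊆ Set.extremePoints ℝ K := by
  rintro _ ⟨e, he, rfl⟩
  rw [mem_extremePoints] at he ⊢
  obtain ⟨heK, hext⟩ := he
  refine ⟨himg ▸ Set.mem_image_of_mem φ heK, ?_⟩
  intro x₁ hx₁ x₂ hx₂ hseg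
  rw [← himg] at hx₁ hx₂
  obtain ⟨y₁, hy₁, rfl⟩ := hx₁
  obtain ⟨y₂, hy₂, rfl⟩ := hx₂
  obtain ⟨a, b, ha, hb, hab, habe⟩ := hseg
  have haff : φ (a • y₁ + b • y₂) = a • φ y₁ + b • φ y₂ := by
    have hd : a • d + b • d = d := by rw [← add_smul, hab, one_smul]
    rw [hφ (a • y₁ + b • y₂), hφ y₁, hφ y₂, map_add, map_smul, map_smul, smul_add, smul_add]
    conv_lhs => rw [← hd]
    abel
  have hcombo : a • y₁ + b • y₂ = e := hinj (haff.trans habe)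
  have hres := hext y₁ hy₁ y₂ hy₂ ⟨a, b, ha, hb, hab, hcombo⟩
  exact ⟨by rw [hres.1], by rw [hres.2]⟩

lemma image_connectedComponentIn' {F : Set (E m)} {φ ψ : E m → E m} (hφ : Continuous φ)
    (hψ : Continuous ψ) (hinv : ∀ y, ψ (φ y) = y) (hinv' : ∀ y, φ (ψ y) = y)
    (hF : φ '' F = F) {y : E m} (hy : y ∈ F) :
    φ '' connectedComponentIn F y = connectedComponentIn F (φ y) := by
  have hψF : ψ '' F = F := by
    conv_lhs => rw [← hF]
    rw [Set.image_image]
    simp [hinv]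
  have hsub : ∀ (χ : E m → E m), Continuous χ → χ '' F = F → ∀ z ∈ F,
      χ '' connectedComponentIn F z ⊆ connectedComponentIn F (χ z) := by
    intro χ hχ hχF z hz
    refine (isPreconnected_connectedComponentIn.image χ hχ.continuousOn).subset_connectedComponentIn
      (Set.mem_image_of_mem χ (mem_connectedComponentIn hz)) ?_
    exact (Set.image_mono (connectedComponentIn_subset F z)).trans hχF.subset
  apply Set.Subset.antisymm
  · exact hsub φ hφ hF y hy
  · have hφyF : φ y ∈ F := by rw [← hF]; exact Set.mem_image_of_mem φ hy
    have h2 := hsub ψ hψ hψF (φ y) hφyF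
    rw [hinv y] at h2
    intro z hz
    exact ⟨ψ z, h2 (Set.mem_image_of_mem ψ hz), hinv' z⟩

lemma exists_good_t {Φ : Set (E m)} (hfin : Φ.Finite) (β x : E m) :
    ∃ t : ℝ, ∀ α ∈ Φ, ⟪α, β⟫ ≠ 0 → ∀ k : ℤ, ⟪α, x⟫ + t * ⟪α, β⟫ ≠ (k:ℝ) := by
  set Bad : Set ℝ :=
    ⋃ α ∈ {α ∈ Φ | ⟪α, β⟫ ≠ (0:ℝ)}, ⋃ k : ℤ, {t : ℝ | ⟪α, x⟫ + t * ⟪α, β⟫ = (k:ℝ)} with hBad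
  have hc : Bad.Countable := by
    refine Set.Countable.biUnion ((hfin.subset (Set.sep_subset _ _)).countable) fun α hα => ?_
    refine Set.countable_iUnion fun k => ?_
    refine Set.Subsingleton.countable ?_
    intro t₁ h₁ t₂ h₂
    simp only [Set.mem_setOf_eq] at h₁ h₂
    have hs : ⟪α, β⟫ ≠ 0 := (Set.mem_sep_iff.mp hα).2
    have h3 : t₁ * ⟪α, β⟫ = t₂ * ⟪α, β⟫ := by
      have := h₁.trans h₂.symm
      linarith
    exact mul_right_cancel₀ hs h3
  have hex : ∃ t : ℝ, t ∉ Bad := by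
    by_contra hcon
    push_neg at hcon
    have huniv : (Set.univ : Set ℝ) ⊆ Bad := fun t _ => hcon t
    exact Set.not_countable_univ (hc.mono huniv)
  obtain ⟨t, ht⟩ := hex
  refine ⟨t, fun α hα hαβ k hk => ht ?_⟩
  rw [hBad]
  exact Set.mem_biUnion ⟨hα, hαβ⟩ (Set.mem_iUnion.mpr ⟨k, hk⟩)

end Misc


section Composite
variable {m : ℕ}

lemma mem_tubeWalls_iff {Φ : Set (E m)} {β y : E m} :
    y ∈ tubeWalls Φ β ↔ ∃ α ∈ Φ, ⟪α, β⟫ = (0:ℝ) ∧ ∃ k : ℤ, ⟪α, y⟫ = (k:ℝ) := by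
  constructor
  · intro h
    simp only [tubeWalls, Set.mem_iUnion, Set.mem_sep_iff, wall, Set.mem_setOf_eq] at h
    obtain ⟨α, ⟨hα1, hα2⟩, k, hk⟩ := h
    exact ⟨α, hα1, hα2, k, hk⟩
  · rintro ⟨α, hα1, hα2, k, hk⟩
    simp only [tubeWalls, Set.mem_iUnion, Set.mem_sep_iff, wall, Set.mem_setOf_eq]
    exact ⟨α, ⟨hα1, hα2⟩, k, hk⟩

lemma image_tubeWalls {Φ : Set (E m)} {β : E m} {f : E m → E m} {L : E m ≃ₗᵢ[ℝ] E m} {b : E m}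
    (hrep : ∀ x, f x = L x + b) (hsΦ : ∀ γ ∈ Φ, L γ ∈ Φ) (hsΦ' : ∀ γ ∈ Φ, L.symm γ ∈ Φ)
    (hb : ∀ γ ∈ Φ, ∃ z : ℤ, ⟪γ, b⟫ = (z:ℝ)) (hLβ : L β = β) :
    f '' tubeWalls Φ β = tubeWalls Φ β := by
  have hLβ' : L.symm β = β := by
    apply L.injective
    rw [L.apply_symm_apply, hLβ]
  apply Set.Subset.antisymm
  · rintro _ ⟨z, hz, rfl⟩
    rw [mem_tubeWalls_iff] at hz ⊢
    obtain ⟨α, hα, hαβ, k, hk⟩ := hz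
    obtain ⟨z', hz'⟩ := hb (L α) (hsΦ α hα)
    refine ⟨L α, hsΦ α hα, ?_, k + z', ?_⟩
    · have hh : ⟪L α, β⟫ = ⟪α, β⟫ := by
        conv_lhs => rw [← hLβ]
        exact L.inner_map_map α β
      rw [hh, hαβ]
    · rw [hrep, inner_add_right, L.inner_map_map, hk, hz']
      push_cast; ring
  · intro z hz
    set g : E m → E m := fun y => L.symm (y - b) with hg
    have hfg : f (g z) = z := by
      rw [hg, hrep, L.apply_symm_apply]
      abel
    rw [Set.mem_image]
    refine ⟨g z, ?_, hfg⟩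
    rw [mem_tubeWalls_iff] at hz ⊢
    obtain ⟨α, hα, hαβ, k, hk⟩ := hz
    obtain ⟨z', hz'⟩ := hb α hα
    refine ⟨L.symm α, hsΦ' α hα, ?_, k - z', ?_⟩
    · have hh : ⟪L.symm α, β⟫ = ⟪α, β⟫ := by
        conv_lhs => rw [← hLβ']
        exact L.symm.inner_map_map α β
      rw [hh, hαβ]
    · rw [hg]
      show ⟪L.symm α, L.symm (z - b)⟫ = _
      rw [LinearIsometryEquiv.inner_map_map, inner_sub_right, hk, hz']
      push_cast; ring

lemma trans_vec_perp {Φ : Set (E m)} {β x₀ : E m} {f : E m → E m}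
    {L : E m ≃ₗᵢ[ℝ] E m} {b v p : E m}
    (hrep : ∀ x, f x = L x + b) (hp : p ∈ minSet f)
    (hline : ∀ y ∈ minSet f, ∀ t : ℝ, y + t • v ∈ minSet f ∧ f (y + t • v) = y + t • v + v)
    {T : Set (E m)} (hbox : T = tubeBox Φ β x₀) (hT : f '' T = T) {x : E m} (hxT : x ∈ T)
    {α : E m} (hα : α ∈ Φ) (hαβ : ⟪α, β⟫ = 0) : ⟪α, v⟫ = 0 := by
  have hiter : ∀ n : ℕ, f^[n] x ∈ T ∧ dist (f^[n] x) (p + (n:ℝ) • v) ≤ dist x p := by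
    intro n
    induction n with
    | zero =>
      constructor
      · simpa using hxT
      · simp only [Function.iterate_zero, id_eq, Nat.cast_zero, zero_smul, add_zero]
        exact le_refl _
    | succ n ih =>
      obtain ⟨ih1, ih2⟩ := ih
      constructor
      · rw [Function.iterate_succ_apply']
        rw [← hT]
        exact Set.mem_image_of_mem f ih1
      · rw [Function.iterate_succ_apply']
        have hstep : f (p + (n:ℝ) • v) = p + ((n:ℝ)+1) • v := by
          rw [(hline p hp (n:ℝ)).2, add_smul, one_smul]
          abel
        have hcast : ((n+1 : ℕ):ℝ) = (n:ℝ) + 1 := by push_cast; ring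
        rw [hcast, ← hstep, affRep_dist hrep]
        exact ih2
  by_contra hne
  have habs : 0 < |⟪α, v⟫| := abs_pos.mpr hne
  set Mα : ℝ := |(⌊⟪α, x₀⟫⌋ : ℝ)| + 1 with hMα
  obtain ⟨n, hn⟩ := exists_nat_gt ((|⟪α, p⟫| + Mα + ‖α‖ * dist x p) / |⟪α, v⟫|)
  have hkey : |⟪α, p⟫| + Mα + ‖α‖ * dist x p < (n:ℝ) * |⟪α, v⟫| := by
    rw [div_lt_iff₀ habs] at hn
    linarith
  obtain ⟨h1, h2⟩ := hiter n
  rw [hbox] at h1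
  obtain ⟨hb1, hb2⟩ := h1 α hα hαβ
  have hbnd : |⟪α, f^[n] x⟫| ≤ Mα := by
    rw [hMα, abs_le]
    constructor
    · have := neg_abs_le ((⌊⟪α, x₀⟫⌋ : ℝ))
      linarith
    · have := le_abs_self ((⌊⟪α, x₀⟫⌋ : ℝ))
      linarith
  have hinner : |⟪α, p + (n:ℝ) • v⟫ - ⟪α, f^[n] x⟫| ≤ ‖α‖ * dist x p := by
    have heq : ⟪α, p + (n:ℝ) • v⟫ - ⟪α, f^[n] x⟫ = ⟪α, (p + (n:ℝ) • v) - f^[n] x⟫ := by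
      rw [inner_sub_right]
    rw [heq]
    calc |⟪α, (p + (n:ℝ) • v) - f^[n] x⟫| ≤ ‖α‖ * ‖(p + (n:ℝ) • v) - f^[n] x‖ :=
          abs_real_inner_le_norm _ _
      _ = ‖α‖ * dist (f^[n] x) (p + (n:ℝ) • v) := by rw [dist_eq_norm, norm_sub_rev]
      _ ≤ ‖α‖ * dist x p := mul_le_mul_of_nonneg_left h2 (norm_nonneg α)
  have hexp : ⟪α, p + (n:ℝ) • v⟫ = ⟪α, p⟫ + (n:ℝ) * ⟪α, v⟫ := by
    rw [inner_add_right, real_inner_smul_right]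
  have ht1 : |⟪α, p + (n:ℝ) • v⟫| ≤ Mα + ‖α‖ * dist x p := by
    have := abs_add_le (⟪α, f^[n] x⟫) (⟪α, p + (n:ℝ) • v⟫ - ⟪α, f^[n] x⟫)
    simp only [add_sub_cancel] at this
    linarith
  have ht2 : (n:ℝ) * |⟪α, v⟫| ≤ |⟪α, p⟫| + |⟪α, p + (n:ℝ) • v⟫| := by
    have h3 : (n:ℝ) * ⟪α, v⟫ = ⟪α, p + (n:ℝ) • v⟫ - ⟪α, p⟫ := by rw [hexp]; ring
    have h4 : |(n:ℝ) * ⟪α, v⟫| ≤ |⟪α, p + (n:ℝ) • v⟫| + |⟪α, p⟫| := by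
      rw [h3]; exact abs_sub _ _
    rw [abs_mul, Nat.abs_cast] at h4
    linarith
  linarith

lemma tube_fixed_min {Φ : Set (E m)} {β x₀ : E m} (hβ0 : β ≠ 0) {w : Equiv.Perm (E m)}
    {L : E m ≃ₗᵢ[ℝ] E m} {b : E m} (hrep : ∀ z, ⇑w z = L z + b) (hLβ : L β = β)
    {T : Set (E m)} (hbox : T = tubeBox Φ β x₀) (h1 : ⇑w '' T = T)
    {x : E m} (hx : IsBarycenter (T ∩ {y : E m | ⟪β, y⟫ = (0:ℝ)}) x) :
    ⇑w x = x + (⟪β, b⟫ / ⟪β, β⟫) • β ∧ x ∈ minSet ⇑w ∧ ∀ t : ℝ, x + t • β ∈ minSet ⇑w := by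
  classical
  obtain ⟨F, hFe, hFne, hxe⟩ := hx
  have hωω : ⟪β, β⟫ ≠ (0:ℝ) := (inner_self_ne_zero (𝕜 := ℝ)).mpr hβ0
  have hωpos : (0:ℝ) < ⟪β, β⟫ := lt_of_le_of_ne real_inner_self_nonneg (Ne.symm hωω)
  set cβ : ℝ := ⟪β, b⟫ / ⟪β, β⟫ with hcβ
  set d : E m := b - cβ • β with hd
  set φ : E m → E m := fun y => ⇑w y - cβ • β with hφ
  set ψ : E m → E m := fun z => w.symm (z + cβ • β) with hψ
  have hφrep : ∀ y, φ y = L y + d := by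
    intro y
    show ⇑w y - cβ • β = L y + (b - cβ • β)
    rw [hrep]
    abel
  have hβLy : ∀ y, ⟪β, L y⟫ = ⟪β, y⟫ := by
    intro y
    conv_lhs => rw [← hLβ]
    exact L.inner_map_map β y
  have hβw : ∀ y, ⟪β, ⇑w y⟫ = ⟪β, y⟫ + ⟪β, b⟫ := by
    intro y
    rw [hrep, inner_add_right, hβLy]
  have hβφ : ∀ y, ⟪β, φ y⟫ = ⟪β, y⟫ := by
    intro y
    rw [hφ]
    show ⟪β, ⇑w y - cβ • β⟫ = _
    rw [inner_sub_right, hβw, real_inner_smul_right, hcβ, div_mul_cancel₀ _ hωω]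
    ring
  have hψφ : ∀ y, ψ (φ y) = y := by
    intro y
    rw [hψ, hφ]
    show w.symm ((⇑w y - cβ • β) + cβ • β) = y
    rw [sub_add_cancel, Equiv.symm_apply_apply]
  have hφψ : ∀ z, φ (ψ z) = z := by
    intro z
    rw [hψ, hφ]
    show ⇑w (w.symm (z + cβ • β)) - cβ • β = z
    rw [Equiv.apply_symm_apply, add_sub_cancel_right]
  have hwsymm : ∀ z, w.symm z = L.symm (z - b) := by
    intro z
    apply w.injective
    rw [Equiv.apply_symm_apply, hrep, L.apply_symm_apply]
    abel
  have hφcont : Continuous φ := by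
    have : φ = fun y => L y + d := funext hφrep
    rw [this]
    exact (L.continuous.add continuous_const)
  have hψcont : Continuous ψ := by
    have : ψ = fun z => L.symm ((z + cβ • β) - b) := by
      funext z
      rw [hψ]
      show w.symm (z + cβ • β) = _
      rw [hwsymm]
    rw [this]
    exact L.symm.continuous.comp ((continuous_id.add continuous_const).sub continuous_const)
  set s : Set (E m) := T ∩ {y : E m | ⟪β, y⟫ = (0:ℝ)} with hs
  have hwT : ∀ y ∈ T, ⇑w y ∈ T := by
    intro y hy
    rw [← h1]
    exact Set.mem_image_of_mem _ hy
  have hwsymmT : ∀ y ∈ T, w.symm y ∈ T := by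
    intro y hy
    rw [← h1] at hy
    obtain ⟨z, hz, rfl⟩ := hy
    rw [Equiv.symm_apply_apply]
    exact hz
  have hφs : φ '' s = s := by
    apply Set.Subset.antisymm
    · rintro _ ⟨y, ⟨hyT, hyH⟩, rfl⟩
      constructor
      · rw [hφ]
        show ⇑w y - cβ • β ∈ T
        have h2 : ⇑w y + (-cβ) • β ∈ T := by
          rw [hbox]
          exact tubeBox_add_smul (hbox ▸ hwT y hyT) _
        rw [neg_smul] at h2
        rw [sub_eq_add_neg]
        exact h2
      · show ⟪β, φ y⟫ = 0
        rw [hβφ]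
        exact hyH
    · intro z hz
      refine ⟨ψ z, ⟨?_, ?_⟩, hφψ z⟩
      · rw [hψ]
        show w.symm (z + cβ • β) ∈ T
        refine hwsymmT _ ?_
        rw [hbox]
        exact tubeBox_add_smul (hbox ▸ hz.1) _
      · show ⟪β, ψ z⟫ = 0
        have h3 : ⟪β, φ (ψ z)⟫ = ⟪β, ψ z⟫ := hβφ (ψ z)
        rw [hφψ] at h3
        rw [← h3]
        exact hz.2
  have hφK : φ '' closure s = closure s := by
    have h4 : φ '' closure s = closure (φ '' s) := by
      exact (Homeomorph.mk ⟨φ, ψ, hψφ, hφψ⟩ hφcont hψcont).image_closure s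
    rw [h4, hφs]
  have hφinj : Function.Injective φ := Function.LeftInverse.injective hψφ
  have hψinj : Function.Injective ψ := Function.LeftInverse.injective hφψ
  have hψK : ψ '' closure s = closure s := by
    conv_lhs => rw [← hφK]
    rw [Set.image_image]
    simp only [hψφ]
    exact Set.image_id _
  have hψrep : ∀ z, ψ z = L.symm z + L.symm (cβ • β - b) := by
    intro z
    rw [hψ]
    show w.symm (z + cβ • β) = _
    rw [hwsymm, ← map_add]
    congr 1
    abel
  have hEP1 : φ '' Set.extremePoints ℝ (closure s) ⊆ Set.extremePoints ℝ (closure s) :=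
    extremePoints_image_subset (L.toLinearEquiv.toLinearMap) d (fun y => hφrep y) hφinj hφK
  have hEP2 : ψ '' Set.extremePoints ℝ (closure s) ⊆ Set.extremePoints ℝ (closure s) :=
    extremePoints_image_subset (L.symm.toLinearEquiv.toLinearMap) (L.symm (cβ • β - b))
      (fun y => hψrep y) hψinj hψK
  have hEP : φ '' Set.extremePoints ℝ (closure s) = Set.extremePoints ℝ (closure s) := by
    apply Set.Subset.antisymm hEP1
    intro e he
    refine ⟨ψ e, hEP2 (Set.mem_image_of_mem ψ he), hφψ e⟩
  have hφF : φ '' (F : Set (E m)) = (F : Set (E m)) := by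
    rw [hFe]
    exact hEP
  have hcard : (0:ℝ) < (F.card : ℝ) := by exact_mod_cast Finset.card_pos.mpr hFne
  have hn0 : ((F.card : ℝ)) ≠ 0 := hcard.ne'
  have himgF : Finset.image φ F = F := by
    apply Finset.coe_injective
    rw [Finset.coe_image, hφF]
  have hsum : ∑ e ∈ F, φ e = ∑ e ∈ F, e := by
    have h5 : ∑ e ∈ Finset.image φ F, e = ∑ e ∈ F, φ e :=
      Finset.sum_image (fun a _ b _ h => hφinj h)
    rw [himgF] at h5
    exact h5.symm
  have hsum2 : ∑ e ∈ F, φ e = L (∑ e ∈ F, e) + (F.card : ℝ) • d := by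
    rw [Finset.sum_congr rfl (fun e _ => hφrep e), Finset.sum_add_distrib, map_sum,
      Finset.sum_const]
    congr 1
    rw [Nat.cast_smul_eq_nsmul ℝ]
  have hφx : φ x = x := by
    rw [hxe, hφrep, map_smul]
    conv_rhs => rw [← hsum, hsum2]
    rw [smul_add, smul_smul, inv_mul_cancel₀ hn0, one_smul]
  have hwx : ⇑w x = x + cβ • β := by
    have h6 : ⇑w x - cβ • β = x := hφx
    rw [sub_eq_iff_eq_add] at h6
    rw [h6]
  have hnormpos : (0:ℝ) < ‖β‖ := norm_pos_iff.mpr hβ0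
  have hnn : ‖β‖ * ‖β‖ = ⟪β, β⟫ := (real_inner_self_eq_norm_mul_norm β).symm
  have hkey : ∀ y, |⟪β, b⟫| ≤ ‖β‖ * dist y (⇑w y) := by
    intro y
    have h7 : ⟪β, ⇑w y - y⟫ = ⟪β, b⟫ := by rw [inner_sub_right, hβw]; ring
    have h8 := abs_real_inner_le_norm β (⇑w y - y)
    rw [h7] at h8
    calc |⟪β, b⟫| ≤ ‖β‖ * ‖⇑w y - y‖ := h8
      _ = ‖β‖ * dist y (⇑w y) := by rw [dist_eq_norm, norm_sub_rev]
  have hxd : ‖β‖ * dist x (⇑w x) = |⟪β, b⟫| := by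
    rw [hwx]
    have h9 : dist x (x + cβ • β) = ‖cβ • β‖ := by rw [dist_eq_norm]; simp
    rw [h9, norm_smul, Real.norm_eq_abs, hcβ, abs_div, abs_of_pos hωpos, ← hnn]
    field_simp
  have hxmin : x ∈ minSet ⇑w :=
    mem_minSet_of_le (fun z => (mul_le_mul_iff_right₀ hnormpos).mp (by rw [hxd]; exact hkey z))
  refine ⟨hwx, hxmin, fun t => ?_⟩
  have hwxt : ⇑w (x + t • β) = (x + t • β) + cβ • β := by
    have h11 : L (x + t • β) + b = (L x + b) + t • β := by
      rw [map_add, map_smul, hLβ]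
      abel
    rw [hrep, h11, ← hrep, hwx]
    abel
  apply mem_minSet_of_le
  intro z
  have hd1 : dist (x + t • β) (⇑w (x + t • β)) = dist x (⇑w x) := by
    rw [hwxt, hwx, dist_eq_norm, dist_eq_norm]
    congr 1
    abel
  rw [hd1]
  exact (mul_le_mul_iff_right₀ hnormpos).mp (by rw [hxd]; exact hkey z)

end Composite

/-- For a hyperbolic element `w` of the affine Weyl group, with translation
vector `v_w`, and a geodesic tube `𝒯` of direction `β∨ = ω_i∨` with centerline `ℒ`,
the following are equivalent:
(1) `w(𝒯) = 𝒯`;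
(2) `ℒ ⊆ Min(w)` and `v_w` is parallel to `β∨`;
(3) there is a point `y ∈ 𝒯 ∩ Min(w)` contained in some alcove, and `v_w` is parallel
to `β∨`. -/
theorem tube_stabilizer_tfae {m : ℕ} (Φ : Set (E m)) (hΦ : IsRootSystem Φ)
    (B ω : Fin m → E m) (hB : IsSimpleSystem Φ B) (hω : IsFundamentalCoweights B ω)
    (i : Fin m) (T : Set (E m)) (hT : IsGeodesicTube Φ (ω i) T)
    (x : E m) (hx : IsBarycenter (T ∩ {y : E m | ⟪ω i, y⟫ = (0:ℝ)}) x)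
    (w : Equiv.Perm (E m)) (hw : w ∈ Waff Φ) (hhyp : IsHyperbolic (w : E m → E m))
    (v : E m) (hv : HasTransVec (w : E m → E m) v) :
    List.TFAE
      [ (w : E m → E m) '' T = T,
        centerline x (ω i) ⊆ minSet (w : E m → E m) ∧ ∃ c : ℝ, v = c • ω i,
        (∃ y ∈ T ∩ minSet (w : E m → E m), ∃ C, IsAlcove Φ C ∧ y ∈ C) ∧
          ∃ c : ℝ, v = c • ω i ] := by
  obtain ⟨x₀, hx₀, hTeq⟩ := hT
  have hfin := hΦ.finite
  have hbox : T = tubeBox Φ (ω i) x₀ := by rw [hTeq]; exact tube_eq_tubeBox hfin hx₀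
  obtain ⟨L, b, hrep, hsΦ, hsΦ', hbint⟩ := affRep_of_mem_Waff hΦ hw
  obtain ⟨hv0, hLv, hline⟩ := minset_facts hrep hhyp hv
  have hβ0 : ω i ≠ 0 := coweight_ne_zero hω i
  have hxmem : x ∈ tubeBox Φ (ω i) x₀ ∧ ⟪ω i, x⟫ = 0 :=
    barycenter_mem_tube hB hω i hx₀ (by rw [← hbox]; exact hx)
  have hxT : x ∈ T := by rw [hbox]; exact hxmem.1
  obtain ⟨⟨p, hp⟩, hpos⟩ := hhyp
  tfae_have 1 → 2 := by
    intro h1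
    have hperp : ∀ j, j ≠ i → ⟪B j, v⟫ = 0 := by
      intro j hj
      exact trans_vec_perp hrep hp hline hbox h1 hxT (hB.mem j) (by rw [hω j i, if_neg hj])
    obtain ⟨c, hc⟩ := perp_span hB.indep hω i hperp
    have hc0 : c ≠ 0 := fun h => hv0 (by rw [hc, h, zero_smul])
    have hLβ : L (ω i) = ω i := by
      have h2 : L v = v := hLv
      rw [hc, map_smul] at h2
      exact smul_right_injective (E m) hc0 h2
    obtain ⟨hwx, hxmin, hcl⟩ := tube_fixed_min hβ0 hrep hLβ hbox h1 hx
    refine ⟨?_, c, hc⟩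
    rintro q ⟨t, rfl⟩
    exact hcl t
  tfae_have 2 → 3 := by
    rintro ⟨hcenter, c, hc⟩
    obtain ⟨t, ht⟩ := exists_good_t hfin (ω i) x
    have hyT : x + t • ω i ∈ T := by
      rw [hbox]; exact tubeBox_add_smul hxmem.1 t
    have hymin : x + t • ω i ∈ minSet ⇑w := hcenter ⟨t, rfl⟩
    have hyW : x + t • ω i ∈ (allWalls Φ)ᶜ := by
      intro hmem
      simp only [allWalls, Set.mem_iUnion, wall, Set.mem_setOf_eq] at hmem
      obtain ⟨α, hα, k, hk⟩ := hmem
      by_cases hαβ : ⟪α, ω i⟫ = (0:ℝ)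
      · have h3 : x + t • ω i ∈ tubeBox Φ (ω i) x₀ := tubeBox_add_smul hxmem.1 t
        exact not_mem_tubeWalls_iff.mp (tubeBox_subset_compl h3) α hα hαβ k hk
      · exact ht α hα hαβ k (by rw [← hk, inner_add_right, real_inner_smul_right])
    exact ⟨⟨x + t • ω i, ⟨hyT, hymin⟩, connectedComponentIn (allWalls Φ)ᶜ (x + t • ω i),
      ⟨x + t • ω i, hyW, rfl⟩, mem_connectedComponentIn hyW⟩, c, hc⟩
  tfae_have 3 → 1 := by
    rintro ⟨⟨y, ⟨hyT, hymin⟩, C, hC, hyC⟩, c, hc⟩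
    have hc0 : c ≠ 0 := fun h => hv0 (by rw [hc, h, zero_smul])
    have hLβ : L (ω i) = ω i := by
      have h2 : L v = v := hLv
      rw [hc, map_smul] at h2
      exact smul_right_injective (E m) hc0 h2
    have hwy : ⇑w y = y + c • ω i := by rw [hv y hymin, hc]
    have hwyT : ⇑w y ∈ T := by
      rw [hwy, hbox]
      exact tubeBox_add_smul (by rw [← hbox]; exact hyT) c
    have hWalls : ⇑w '' tubeWalls Φ (ω i) = tubeWalls Φ (ω i) :=
      image_tubeWalls hrep hsΦ hsΦ' hbint hLβ
    have hFimg : ⇑w '' (tubeWalls Φ (ω i))ᶜ = (tubeWalls Φ (ω i))ᶜ := by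
      rw [Set.image_compl_eq w.bijective, hWalls]
    have hcontw : Continuous ⇑w := by
      have heq : ⇑w = fun z => L z + b := funext hrep
      rw [heq]; exact L.continuous.add continuous_const
    have hcontws : Continuous ⇑w.symm := by
      have hws : ∀ z, w.symm z = L.symm (z - b) := by
        intro z
        apply w.injective
        rw [Equiv.apply_symm_apply, hrep, L.apply_symm_apply]
        abel
      have heq : ⇑w.symm = fun z => L.symm (z - b) := funext hws
      rw [heq]
      exact L.symm.continuous.comp (continuous_id.sub continuous_const)
    have hyT' : y ∈ connectedComponentIn (tubeWalls Φ (ω i))ᶜ x₀ := by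
      rw [← hTeq]; exact hyT
    have hyF : y ∈ (tubeWalls Φ (ω i))ᶜ := connectedComponentIn_subset _ _ hyT'
    have hTy : T = connectedComponentIn (tubeWalls Φ (ω i))ᶜ y :=
      hTeq.trans (connectedComponentIn_eq hyT')
    rw [hTy] at hwyT ⊢
    rw [image_connectedComponentIn' hcontw hcontws (fun z => w.symm_apply_apply z)
      (fun z => w.apply_symm_apply z) hFimg hyF]
    exact (connectedComponentIn_eq hwyT).symm
  tfae_finish

end
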